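/- Let n ≥ 4 and let C_{I;j} be a k-CNOT gate on n wires with control set I of size k, where 3 ≤ k < n and j ∉ I. Then there exists a reversible circuit S on n + (k − 2) wires consisting of exactly 2k − 3 gates, each of which is a 2-CNOT gate, whose permutation g satisfies g(φ_{n,n+k−2}(x)) = φ_{n,n+k−2}(C_{I;j}(x)) for all x ∈ Z2^n; in particular all k − 2 additional outputs return to the value 0. -/

import Mathlib

/-- The k-CNOT gate on `m` wires with control set `I` (with `j` removed, so that when
`j ∉ I` this is exactly the gate `C_{I;j}`): it replaces coordinate `j` of `x` by
`x j + ∏ i ∈ I.erase j, x i` and leaves all other coordinates unchanged.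
With `I = ∅` this is the gate NOT_j, with `I = {i}`, `i ≠ j`, the gate CNOT_{i;j},
and with `I = {i1, i2}`, `i1, i2, j` pairwise distinct, the gate 2-CNOT_{i1,i2;j}. -/
def kcnot (m : ℕ) (I : Finset (Fin m)) (j : Fin m) : Equiv.Perm (Fin m → ZMod 2) :=
  Function.Involutive.toPerm
    (fun x => Function.update x j (x j + ∏ i ∈ I.erase j, x i))
    (by
      intro x
      have ht : ∀ (y : Fin m → ZMod 2) (v : ZMod 2),
          ∏ i ∈ I.erase j, (Function.update y j v) i = ∏ i ∈ I.erase j, y i :=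
        fun y v => Finset.prod_congr rfl fun i hi =>
          Function.update_of_ne (Finset.ne_of_mem_erase hi) _ _
      have h2 : ∀ a : ZMod 2, a + a = 0 := by decide
      funext y
      by_cases hy : y = j
      · subst hy
        simp [Function.update_self, ht, add_assoc, h2]
      · simp [Function.update_of_ne hy])

/-- The set Ω_n^2 of all gates NOT, CNOT and 2-CNOT on `n` wires, viewed as
permutations of the Boolean cube `Fin n → ZMod 2`. -/
def gateSet (n : ℕ) : Set (Equiv.Perm (Fin n → ZMod 2)) :=
  {g | ∃ (I : Finset (Fin n)) (j : Fin n), I.card ≤ 2 ∧ j ∉ I ∧ g = kcnot n I j}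

/-- The permutation defined by a reversible circuit (a list of gates applied in
list order: the head of the list is applied first). -/
def circuitPerm {n : ℕ} (l : List (Equiv.Perm (Fin n → ZMod 2))) :
    Equiv.Perm (Fin n → ZMod 2) :=
  l.reverse.prod

/-- The extending map φ_{n,n+q} appending `q` zero coordinates. -/
def extendMap (n q : ℕ) (x : Fin n → ZMod 2) : Fin (n + q) → ZMod 2 :=
  fun i => if h : (i : ℕ) < n then x ⟨i, h⟩ else 0

/-- The reducing map ψ^π sending `y` to `(y (π 1), …, y (π n))`. -/
def reduceMap (n q : ℕ) (π : Equiv.Perm (Fin (n + q))) (y : Fin (n + q) → ZMod 2) :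
    Fin n → ZMod 2 :=
  fun i => y (π (Fin.castAdd q i))

/-- A map `f : Z2^n → Z2^n` is realized by some reversible circuit on `n + q` wires
using `q` additional inputs.  `F(n,q)` is the set of all such maps. -/
def Realizes (n q : ℕ) (f : (Fin n → ZMod 2) → (Fin n → ZMod 2)) : Prop :=
  ∃ l : List (Equiv.Perm (Fin (n + q) → ZMod 2)),
    (∀ g ∈ l, g ∈ gateSet (n + q)) ∧
    ∃ π : Equiv.Perm (Fin (n + q)),
      ∀ x, reduceMap n q π (circuitPerm l (extendMap n q x)) = f x

/-- `L(f,q)`: the minimal complexity of a reversible circuit realizing `f` using `q`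
additional inputs. -/
noncomputable def Lfq (n q : ℕ) (f : (Fin n → ZMod 2) → (Fin n → ZMod 2)) : ℕ :=
  sInf {m | ∃ l : List (Equiv.Perm (Fin (n + q) → ZMod 2)),
    l.length = m ∧ (∀ g ∈ l, g ∈ gateSet (n + q)) ∧
    ∃ π : Equiv.Perm (Fin (n + q)),
      ∀ x, reduceMap n q π (circuitPerm l (extendMap n q x)) = f x}

/-- The Shannon function `L(n,q) = max_{f ∈ F(n,q)} L(f,q)`. -/
noncomputable def shannonL (n q : ℕ) : ℕ :=
  sSup (Lfq n q '' {f | Realizes n q f})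

lemma kcnot_apply (m : ℕ) (I : Finset (Fin m)) (j : Fin m) (x : Fin m → ZMod 2) :
    kcnot m I j x = Function.update x j (x j + ∏ i ∈ I.erase j, x i) := rfl

lemma kcnot_kcnot (m : ℕ) (I : Finset (Fin m)) (j : Fin m) (x : Fin m → ZMod 2) :
    kcnot m I j (kcnot m I j x) = x := (kcnot m I j).symm_apply_apply x

lemma kcnot_mul_self (m : ℕ) (I : Finset (Fin m)) (j : Fin m) :
    kcnot m I j * kcnot m I j = 1 :=
  Equiv.ext fun x => kcnot_kcnot m I j x

lemma kcnot_pair_apply (m : ℕ) (a b c : Fin m) (hab : a ≠ b) (hca : c ≠ a) (hcb : c ≠ b)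
    (z : Fin m → ZMod 2) :
    kcnot m {a, b} c z = Function.update z c (z c + z a * z b) := by
  rw [kcnot_apply]
  have h1 : ({a, b} : Finset (Fin m)).erase c = {a, b} :=
    Finset.erase_eq_of_notMem (by simp [hca, hcb, Ne.symm])
  rw [h1, Finset.prod_pair hab]

lemma kcnot_update_comm (m : ℕ) (I : Finset (Fin m)) (j : Fin m) (w : Fin m)
    (hw1 : w ∉ I) (hw2 : w ≠ j) (x : Fin m → ZMod 2) (v : ZMod 2) :
    kcnot m I j (Function.update x w v) = Function.update (kcnot m I j x) w v := by
  rw [kcnot_apply, kcnot_apply]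
  have hprod : ∏ i ∈ I.erase j, (Function.update x w v) i = ∏ i ∈ I.erase j, x i :=
    Finset.prod_congr rfl fun i hi =>
      Function.update_of_ne (fun h => hw1 (by rw [← h]; exact Finset.mem_of_mem_erase hi)) _ _
  rw [hprod, Function.update_of_ne hw2.symm]
  exact Function.update_comm hw2 v _ x

lemma list_prod_sq {G : Type*} [Group G] (L : List G) (h : ∀ g ∈ L, g * g = 1) :
    L.reverse.prod * L.prod = 1 := by
  induction L with
  | nil => simp
  | cons g L ih =>
    have hg := h g (List.mem_cons_self)
    have ih' := ih (fun g' hg' => h g' (List.mem_cons_of_mem _ hg'))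
    simp only [List.reverse_cons, List.prod_append, List.prod_cons, List.prod_nil, mul_one]
    calc L.reverse.prod * g * (g * L.prod) = L.reverse.prod * ((g * g) * L.prod) := by
          group
      _ = 1 := by rw [hg, one_mul, ih']

lemma list_prod_update {m : ℕ} (L : List (Equiv.Perm (Fin m → ZMod 2))) (jw : Fin m)
    (v : ZMod 2)
    (h : ∀ g ∈ L, ∀ z, g (Function.update z jw v) = Function.update (g z) jw v) :
    ∀ z, L.prod (Function.update z jw v) = Function.update (L.prod z) jw v := by
  induction L with
  | nil => intro z; simp
  | cons g L ih =>
    intro z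
    rw [List.prod_cons, Equiv.Perm.mul_apply, Equiv.Perm.mul_apply,
      ih (fun g' hg' => h g' (List.mem_cons_of_mem _ hg')) z,
      h g (List.mem_cons_self)]

/-- A `k`-CNOT gate (`3 ≤ k < n`) can be replaced, using `k − 2` additional inputs,
by a composition of exactly `2k − 3` gates 2-CNOT, with all additional outputs
returning to the value 0. -/
theorem stmt17 (n k : ℕ) (hn : 4 ≤ n) (hk3 : 3 ≤ k) (hkn : k < n)
    (I : Finset (Fin n)) (hI : I.card = k) (j : Fin n) (hj : j ∉ I) :
    ∃ l : List (Equiv.Perm (Fin (n + (k - 2)) → ZMod 2)),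
      l.length = 2 * k - 3 ∧
      (∀ g ∈ l, ∃ (I' : Finset (Fin (n + (k - 2)))) (j' : Fin (n + (k - 2))),
        I'.card = 2 ∧ j' ∉ I' ∧ g = kcnot (n + (k - 2)) I' j') ∧
      ∀ x : Fin n → ZMod 2,
        circuitPerm l (extendMap n (k - 2) x) = extendMap n (k - 2) (kcnot n I j x) := by
  set q := k - 2 with hqdef
  have hq0 : 0 < q := by omega
  have hk0 : 0 < k := by omega
  -- control enumeration
  let e : Fin k → Fin n := fun i => ((I.orderIsoOfFin hI) i : Fin n)
  have heI : ∀ i, e i ∈ I := fun i => ((I.orderIsoOfFin hI) i).2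
  have heinj : Function.Injective e := fun i1 i2 h =>
    (I.orderIsoOfFin hI).injective (Subtype.ext h)
  have hej : ∀ i, e i ≠ j := fun i h => hj (h ▸ heI i)
  -- nat-indexed wires
  let E : ℕ → Fin n := fun i => e ⟨i % k, Nat.mod_lt _ hk0⟩
  let C : ℕ → Fin (n + q) := fun i => Fin.castAdd q (E i)
  let A : ℕ → Fin (n + q) := fun t => Fin.natAdd n ⟨t % q, Nat.mod_lt _ hq0⟩
  let jw : Fin (n + q) := Fin.castAdd q j
  have hCval : ∀ i, (C i : ℕ) < n := fun i => (E i).2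
  have hAval : ∀ t, (A t : ℕ) = n + t % q := fun t => rfl
  have hjval : (jw : ℕ) < n := j.2
  have hCA : ∀ i t, C i ≠ A t := by
    intro i t h
    have h1 := hCval i
    rw [h, hAval] at h1
    omega
  have hAinj : ∀ t1 t2, t1 < q → t2 < q → A t1 = A t2 → t1 = t2 := by
    intro t1 t2 h1 h2 h
    have := congrArg Fin.val h
    rw [hAval, hAval, Nat.mod_eq_of_lt h1, Nat.mod_eq_of_lt h2] at this
    omega
  have hCne : ∀ i1 i2, i1 < k → i2 < k → i1 ≠ i2 → C i1 ≠ C i2 := by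
    intro i1 i2 h1 h2 hne h
    have hE : E i1 = E i2 := Fin.castAdd_injective _ _ h
    have := heinj hE
    rw [Fin.mk.injEq, Nat.mod_eq_of_lt h1, Nat.mod_eq_of_lt h2] at this
    exact hne this
  have hjC : ∀ i, jw ≠ C i := by
    intro i h
    exact hej _ (Fin.castAdd_injective _ _ h).symm
  have hjA : ∀ t, jw ≠ A t := by
    intro t h
    have := hjval
    rw [h, hAval] at this
    omega
  -- gates
  let src : ℕ → Fin (n + q) := fun t => if t = 0 then C 0 else A (t - 1)
  let gate : ℕ → Equiv.Perm (Fin (n + q) → ZMod 2) :=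
    fun t => kcnot (n + q) {src t, C (t + 1)} (A t)
  let compute : List (Equiv.Perm (Fin (n + q) → ZMod 2)) := (List.range q).map gate
  let M : Equiv.Perm (Fin (n + q) → ZMod 2) := kcnot (n + q) {A (q - 1), C (k - 1)} jw
  let l : List (Equiv.Perm (Fin (n + q) → ZMod 2)) := compute ++ M :: compute.reverse
  -- gate wire facts
  have hsrcC : ∀ t, t < q → src t ≠ C (t + 1) := by
    intro t ht
    by_cases h0 : t = 0
    · subst h0
      show (if (0:ℕ) = 0 then C 0 else A (0 - 1)) ≠ C 1
      rw [if_pos rfl]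
      exact hCne 0 1 (by omega) (by omega) (by omega)
    · show (if t = 0 then C 0 else A (t - 1)) ≠ C (t + 1)
      rw [if_neg h0]
      exact (hCA _ _).symm
  have hAsrc : ∀ t, t < q → A t ≠ src t := by
    intro t ht
    by_cases h0 : t = 0
    · subst h0
      show A 0 ≠ (if (0:ℕ) = 0 then C 0 else A (0 - 1))
      rw [if_pos rfl]
      exact (hCA _ _).symm
    · show A t ≠ (if t = 0 then C 0 else A (t - 1))
      rw [if_neg h0]
      intro h
      have := hAinj _ _ (by omega) (by omega) h
      omega
  have hAC : ∀ t, A t ≠ C (t + 1) := fun t => (hCA _ _).symm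
  have hjsrc : ∀ t, jw ≠ src t := by
    intro t
    by_cases h0 : t = 0
    · subst h0
      show jw ≠ (if (0:ℕ) = 0 then C 0 else A (0 - 1))
      rw [if_pos rfl]; exact hjC 0
    · show jw ≠ (if t = 0 then C 0 else A (t - 1))
      rw [if_neg h0]; exact hjA _
  have hMne : A (q - 1) ≠ C (k - 1) := (hCA _ _).symm
  refine ⟨l, ?_, ?_, ?_⟩
  · show (compute ++ M :: compute.reverse).length = 2 * k - 3
    simp only [List.length_append, List.length_cons, List.length_reverse,
      List.length_map, List.length_range, compute]
    omega
  · intro g hg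
    have hform : ∀ t, t < q → ∃ (I' : Finset (Fin (n + q))) (j' : Fin (n + q)),
        I'.card = 2 ∧ j' ∉ I' ∧ gate t = kcnot (n + q) I' j' := by
      intro t ht
      refine ⟨{src t, C (t + 1)}, A t, ?_, ?_, rfl⟩
      · exact Finset.card_pair (hsrcC t ht)
      · simp only [Finset.mem_insert, Finset.mem_singleton]
        push_neg
        exact ⟨hAsrc t ht, hAC t⟩
    rcases List.mem_append.mp hg with hg | hg
    · obtain ⟨t, ht, rfl⟩ := List.mem_map.mp hg
      exact hform t (List.mem_range.mp ht)
    · rcases List.mem_cons.mp hg with rfl | hg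
      · refine ⟨{A (q - 1), C (k - 1)}, jw, Finset.card_pair hMne, ?_, rfl⟩
        simp only [Finset.mem_insert, Finset.mem_singleton]
        push_neg
        exact ⟨hjA _, hjC _⟩
      · obtain ⟨t, ht, rfl⟩ := List.mem_map.mp (List.mem_reverse.mp hg)
        exact hform t (List.mem_range.mp ht)
  · intro x
    set y0 : Fin (n + q) → ZMod 2 := extendMap n q x with hy0def
    let X : ℕ → ZMod 2 := fun i => x (E i)
    let P : ℕ → ZMod 2 := fun mm => ∏ i ∈ Finset.range mm, X i
    have hext : ∀ (z : Fin n → ZMod 2) (v : Fin n), extendMap n q z (Fin.castAdd q v) = z v := by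
      intro z v
      simp [extendMap]
    have hy0C : ∀ i, y0 (C i) = X i := fun i => hext x (E i)
    have hy0A : ∀ t, y0 (A t) = 0 := by
      intro t
      show extendMap n q x (A t) = 0
      rw [extendMap]
      rw [dif_neg (by rw [hAval]; omega)]
    have hy0j : y0 jw = x j := hext x j
    let Y : ℕ → (Fin (n + q) → ZMod 2) := fun t => (((List.range t).map gate).reverse).prod y0
    have hY0 : Y 0 = y0 := by simp [Y]
    have hYstep : ∀ t, Y (t + 1) = gate t (Y t) := by
      intro t
      show (((List.range (t+1)).map gate).reverse).prod y0 = gate t (Y t)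
      rw [List.range_succ, List.map_append, List.reverse_append]
      simp [Y, Equiv.Perm.mul_apply]
    have key : ∀ t, t ≤ q →
        (∀ w : Fin (n + q), (∀ s, s < t → w ≠ A s) → Y t w = y0 w) ∧
        (∀ s, s < t → Y t (A s) = P (s + 2)) := by
      intro t
      induction t with
      | zero =>
        intro _
        refine ⟨fun w _ => by rw [hY0], fun s hs => by omega⟩
      | succ t ih =>
        intro ht
        obtain ⟨ih1, ih2⟩ := ih (by omega)
        have htq : t < q := by omega
        have hgate : Y (t + 1) =
            Function.update (Y t) (A t) (Y t (A t) + Y t (src t) * Y t (C (t + 1))) := by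
          rw [hYstep]
          exact kcnot_pair_apply _ _ _ _ (hsrcC t htq) (hAsrc t htq) (hAC t) _
        have hYA : Y t (A t) = 0 := by
          rw [ih1 _ (fun s hs h => by
            have := hAinj t s htq (by omega) h; omega)]
          exact hy0A t
        have hYC : Y t (C (t + 1)) = X (t + 1) := by
          rw [ih1 _ (fun s hs => hCA _ _)]
          exact hy0C _
        have hYsrc : Y t (src t) = P (t + 1) := by
          by_cases h0 : t = 0
          · subst h0
            show Y 0 (if (0:ℕ) = 0 then C 0 else A (0 - 1)) = P 1
            rw [if_pos rfl, hY0, hy0C]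
            show X 0 = ∏ i ∈ Finset.range 1, X i
            rw [Finset.prod_range_one]
          · show Y t (if t = 0 then C 0 else A (t - 1)) = P (t + 1)
            rw [if_neg h0, ih2 (t - 1) (by omega)]
            congr 1
            omega
        constructor
        · intro w hw
          rw [hgate, Function.update_of_ne (hw t (by omega))]
          exact ih1 w (fun s hs => hw s (by omega))
        · intro s hs
          rcases Nat.lt_succ_iff_lt_or_eq.mp hs with hs' | rfl
          · rw [hgate, Function.update_of_ne (fun h => by
              have := hAinj _ _ (by omega) htq h; omega)]
            exact ih2 s hs'
          · rw [hgate, Function.update_self, hYA, hYsrc, hYC, zero_add]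
            show P (s + 1) * X (s + 1) = P (s + 2)
            rw [show s + 2 = (s + 1) + 1 from rfl]
            exact (Finset.prod_range_succ X (s + 1)).symm
    obtain ⟨kq1, kq2⟩ := key q le_rfl
    -- value of the middle gate
    have hYj : Y q jw = x j := by rw [kq1 _ (fun s _ => hjA s)]; exact hy0j
    have hYAq : Y q (A (q - 1)) = P (q + 1) := by
      rw [kq2 (q - 1) (by omega)]
      congr 1
      omega
    have hYCk : Y q (C (k - 1)) = X (k - 1) := by
      rw [kq1 _ (fun s _ => hCA _ _)]
      exact hy0C _
    have hPk : x j + P (q + 1) * X (k - 1) = x j + ∏ i ∈ I.erase j, x i := by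
      congr 1
      have h1 : P (q + 1) * X (k - 1) = P k := by
        have hk1 : k - 1 = q + 1 := by omega
        rw [hk1, show k = (q + 1) + 1 by omega]
        exact (Finset.prod_range_succ X (q + 1)).symm
      rw [h1]
      have h2 : P k = ∏ i : Fin k, x (e i) := by
        show ∏ i ∈ Finset.range k, X i = _
        rw [← Fin.prod_univ_eq_prod_range (fun i => X i) k]
        refine Finset.prod_congr rfl fun i _ => ?_
        show x (E i.val) = x (e i)
        congr 1
        show e ⟨i.val % k, _⟩ = e i
        congr 1
        exact Fin.ext (Nat.mod_eq_of_lt i.isLt)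
      have h3 : ∏ i : Fin k, x (e i) = ∏ i ∈ I, x i := by
        rw [← Finset.prod_coe_sort I x]
        exact Equiv.prod_comp (I.orderIsoOfFin hI).toEquiv (fun b => x (b : Fin n))
      rw [Finset.erase_eq_of_notMem hj, h2, h3]
    -- assemble the circuit
    set v : ZMod 2 := x j + ∏ i ∈ I.erase j, x i with hvdef
    have hcircuit : circuitPerm l = compute.prod * (M * compute.reverse.prod) := by
      show (compute ++ M :: compute.reverse).reverse.prod = _
      simp [List.prod_append, mul_assoc]
    have happly : circuitPerm l y0 = compute.prod (M (Y q)) := by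
      rw [hcircuit, Equiv.Perm.mul_apply, Equiv.Perm.mul_apply]
    have hM : M (Y q) = Function.update (Y q) jw v := by
      show kcnot (n + q) {A (q - 1), C (k - 1)} jw (Y q) = _
      rw [kcnot_pair_apply _ _ _ _ hMne (hjA _) (hjC _), hYj, hYAq, hYCk, hPk]
    have hsq : ∀ g ∈ compute, g * g = 1 := by
      intro g hg
      obtain ⟨t, _, rfl⟩ := List.mem_map.mp hg
      exact kcnot_mul_self _ _ _
    have hCpD : compute.prod (Y q) = y0 := by
      show compute.prod (compute.reverse.prod y0) = y0
      rw [← Equiv.Perm.mul_apply]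
      have h1 : compute.prod * compute.reverse.prod = 1 := by
        have := list_prod_sq compute.reverse (fun g hg => hsq g (List.mem_reverse.mp hg))
        rwa [List.reverse_reverse] at this
      rw [h1]
      rfl
    have hcomm : ∀ g ∈ compute, ∀ z,
        g (Function.update z jw v) = Function.update (g z) jw v := by
      intro g hg z
      obtain ⟨t, ht, rfl⟩ := List.mem_map.mp hg
      refine kcnot_update_comm _ _ _ _ ?_ (hjA t) z v
      simp only [Finset.mem_insert, Finset.mem_singleton]
      push_neg
      exact ⟨hjsrc t, hjC _⟩
    have hfin : Function.update y0 jw v = extendMap n q (kcnot n I j x) := by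
      funext w
      rw [kcnot_apply]
      by_cases hw : (w : ℕ) < n
      · have hw' : w = Fin.castAdd q ⟨(w : ℕ), hw⟩ := Fin.ext rfl
        rw [hw', hext]
        by_cases hwj : (⟨(w : ℕ), hw⟩ : Fin n) = j
        · rw [hwj]
          have hcj : Fin.castAdd q j = jw := rfl
          rw [hcj, Function.update_self, Function.update_self]
        · have hne : Fin.castAdd q ⟨(w : ℕ), hw⟩ ≠ jw :=
            fun h => hwj (Fin.castAdd_injective _ _ h)
          rw [Function.update_of_ne hne, Function.update_of_ne hwj]
          exact hext x _
      · have hwjw : w ≠ jw := fun h => hw (by rw [h]; exact hjval)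
        rw [Function.update_of_ne hwjw]
        show extendMap n q x w = extendMap n q _ w
        simp only [extendMap]
        rw [dif_neg hw, dif_neg hw]
    calc circuitPerm l y0 = compute.prod (M (Y q)) := happly
      _ = compute.prod (Function.update (Y q) jw v) := by rw [hM]
      _ = Function.update (compute.prod (Y q)) jw v := list_prod_update compute jw v hcomm _
      _ = Function.update y0 jw v := by rw [hCpD]
      _ = extendMap n q (kcnot n I j x) := hfin
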